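/- Assume Ω ∈ [π/2, π). Suppose R₁ ≥ R_a, R₂ ≥ R_a and d₁, d₂, d₃ ≥ 0 are such that the pair (L, φ) with L = d₁ + R₁Ω/2 + d₂ + R₂Ω/2 + d₃ and φ given by φ(s) = 0 on [0, d₁], φ(s) = (s − d₁)/R₁ on [d₁, d₁ + R₁Ω/2], φ(s) = Ω/2 on [d₁ + R₁Ω/2, d₁ + R₁Ω/2 + d₂], φ(s) = Ω/2 + (s − d₁ − R₁Ω/2 − d₂)/R₂ on the next interval of length R₂Ω/2, and φ(s) = Ω thereafter (the concatenation: segment d₁, arc of radius R₁ and angle Ω/2, segment d₂, arc of radius R₂ and angle Ω/2, segment d₃) is admissible. Then R₁ = R₂ = R_a, d₁ = d₂ = 0 and d₃ = D; that is, such a curve is admissible only if it reduces to the arc-then-segment curve (L₀, φ₀). -/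

import Mathlib

set_option maxHeartbeats 1000000


open Real

lemma alg_core (R_a D R₁ R₂ d₁ d₂ d₃ : ℝ)
    (s c : ℝ) (hs : 0 < s) (hc : 0 < c) (hc1 : c < 1) (hcs : 2 * c ^ 2 ≤ 1)
    (pyth : s ^ 2 + c ^ 2 = 1)
    (hRa : 0 < R_a) (hR₁ : R_a ≤ R₁) (hR₂ : R_a ≤ R₂)
    (hd₁ : 0 ≤ d₁) (hd₂ : 0 ≤ d₂) (hd₃ : 0 ≤ d₃)
    (eq1 : d₁ + R₁ * s + d₂ * c + (R₂ * (2*s*c) - R₂ * s) + d₃ * (2*c^2-1)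
      = R_a * (2*s*c) + D * (2*c^2-1))
    (eq2 : (R₁ - R₁ * c) + d₂ * s + (R₂ * c - R₂ * (2*c^2-1)) + d₃ * (2*s*c)
      = R_a * (1 - (2*c^2-1)) + D * (2*s*c)) :
    R₁ = R_a ∧ R₂ = R_a ∧ d₁ = 0 ∧ d₂ = 0 ∧ d₃ = D := by
  have hcomb : d₁*(2*s*c) + (R₁-R_a)*(2*s^2*c + (1-c)*(1-2*c^2)) + d₂*s + (R₂-R_a)*(1-c) = 0 := by
    linear_combination (2*s*c) * eq1 - (2*c^2-1) * eq2 + ((R₂ - R_a)*(2*c - 4*c^2)) * pyth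
  have hP : 0 < 2*s^2*c + (1-c)*(1-2*c^2) := by
    have : 0 ≤ (1-c)*(1-2*c^2) := mul_nonneg (by linarith) (by linarith)
    nlinarith [mul_pos (mul_pos hs hs) hc]
  have t2 : 0 ≤ (R₁-R_a)*(2*s^2*c + (1-c)*(1-2*c^2)) := mul_nonneg (by linarith) hP.le
  have t1 : 0 ≤ d₁*(2*s*c) := by positivity
  have t3 : 0 ≤ d₂*s := by positivity
  have t4 : 0 ≤ (R₂-R_a)*(1-c) := mul_nonneg (by linarith) (by linarith)
  have hd1z : d₁ = 0 := by
    by_contra hne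
    have : 0 < d₁ := lt_of_le_of_ne hd₁ (Ne.symm hne)
    nlinarith [mul_pos this (mul_pos (mul_pos two_pos hs) hc)]
  have hR1z : R₁ = R_a := by
    by_contra hne
    have : 0 < R₁ - R_a := by cases lt_or_eq_of_le hR₁ with
      | inl h => linarith | inr h => exact absurd h.symm hne
    nlinarith [mul_pos this hP]
  have hd2z : d₂ = 0 := by
    by_contra hne
    have : 0 < d₂ := lt_of_le_of_ne hd₂ (Ne.symm hne)
    nlinarith [mul_pos this hs]
  have hR2z : R₂ = R_a := by
    by_contra hne
    have : 0 < R₂ - R_a := by cases lt_or_eq_of_le hR₂ with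
      | inl h => linarith | inr h => exact absurd h.symm hne
    nlinarith [mul_pos this (by linarith : (0:ℝ) < 1 - c)]
  refine ⟨hR1z, hR2z, hd1z, hd2z, ?_⟩
  subst hR1z hR2z hd2z
  have h2sc : (0:ℝ) < 2*s*c := by positivity
  have : d₃ * (2*s*c) = D * (2*s*c) := by linarith
  exact mul_right_cancel₀ (ne_of_gt h2sc) this

lemma int_cos_aff (a b c R : ℝ) (hR : R ≠ 0) :
    (∫ s in a..b, Real.cos (c + (s - a) / R))
      = R * Real.sin (c + (b - a) / R) - R * Real.sin c := by
  have h : ∀ x ∈ Set.uIcc a b, HasDerivAt (fun s => R * Real.sin (c + (s - a) / R))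
      (Real.cos (c + (x - a) / R)) x := by
    intro x _
    have h1 : HasDerivAt (fun s : ℝ => c + (s - a) / R) (1 / R) x := by
      simpa using (((hasDerivAt_id x).sub_const a).div_const R).const_add c
    have := (h1.sin).const_mul R
    convert this using 1
    · rfl
    · rfl
    field_simp
  have hi : IntervalIntegrable (fun x => Real.cos (c + (x - a) / R)) MeasureTheory.volume a b :=
    (Real.continuous_cos.comp (by continuity)).intervalIntegrable a b
  have := intervalIntegral.integral_eq_sub_of_hasDerivAt h hi
  simpa using this

lemma int_sin_aff (a b c R : ℝ) (hR : R ≠ 0) :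
    (∫ s in a..b, Real.sin (c + (s - a) / R))
      = R * Real.cos c - R * Real.cos (c + (b - a) / R) := by
  have h : ∀ x ∈ Set.uIcc a b, HasDerivAt (fun s => -(R * Real.cos (c + (s - a) / R)))
      (Real.sin (c + (x - a) / R)) x := by
    intro x _
    have h1 : HasDerivAt (fun s : ℝ => c + (s - a) / R) (1 / R) x := by
      simpa using (((hasDerivAt_id x).sub_const a).div_const R).const_add c
    have := ((h1.cos).const_mul R).neg
    convert this using 1
    · rfl
    · rfl
    · rfl
    field_simp
  have hi : IntervalIntegrable (fun x => Real.sin (c + (x - a) / R)) MeasureTheory.volume a b :=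
    (Real.continuous_sin.comp (by continuity)).intervalIntegrable a b
  have := intervalIntegral.integral_eq_sub_of_hasDerivAt h hi
  simp at this
  linarith [this]


/-- `φ` is `K`-Lipschitz on `[0, L]`. -/
def LipOn (φ : ℝ → ℝ) (L K : ℝ) : Prop :=
  ∀ s ∈ Set.Icc (0:ℝ) L, ∀ t ∈ Set.Icc (0:ℝ) L, |φ s - φ t| ≤ K * |s - t|

/-- The maximal curvature of the curve `(L, φ)`: the least Lipschitz constant of `φ`
(essential supremum of `φ'`) on `[0, L]`. -/
noncomputable def maxCurv (φ : ℝ → ℝ) (L : ℝ) : ℝ :=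
  sInf {K : ℝ | 0 ≤ K ∧ LipOn φ L K}

/-- An admissible curve for the data `(Ω, b₁, b₂)` : a pair `(L, φ)` with `L > 0`,
`φ` nondecreasing and Lipschitz on `[0, L]`, `φ 0 = 0`, `φ L = Ω`,
`∫₀^L cos (φ s) ds = b₁` and `∫₀^L sin (φ s) ds = b₂`. -/
def Admissible (Ω b₁ b₂ L : ℝ) (φ : ℝ → ℝ) : Prop :=
  0 < L ∧ MonotoneOn φ (Set.Icc 0 L) ∧ (∃ K : ℝ, 0 ≤ K ∧ LipOn φ L K) ∧
  φ 0 = 0 ∧ φ L = Ω ∧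
  (∫ s in (0:ℝ)..L, Real.cos (φ s)) = b₁ ∧
  (∫ s in (0:ℝ)..L, Real.sin (φ s)) = b₂

/-- First coordinate of the associated plane curve. -/
noncomputable def xcoord (φ : ℝ → ℝ) (s : ℝ) : ℝ := ∫ t in (0:ℝ)..s, Real.cos (φ t)

/-- Second coordinate of the associated plane curve. -/
noncomputable def ycoord (φ : ℝ → ℝ) (s : ℝ) : ℝ := ∫ t in (0:ℝ)..s, Real.sin (φ t)

/-- If `Ω ∈ [π/2, π)`, a concatenation segment(`d₁`)–arc(`R₁`, angle `Ω/2`)–segment(`d₂`)–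
arc(`R₂`, angle `Ω/2`)–segment(`d₃`) with `R₁, R₂ ≥ R_a` is admissible only if it
reduces to the arc-then-segment curve: `R₁ = R₂ = R_a`, `d₁ = d₂ = 0`, `d₃ = D`. -/
theorem stmt13 (Ω R_a D b₁ b₂ R₁ R₂ d₁ d₂ d₃ L : ℝ) (φ : ℝ → ℝ)
    (hΩ : Ω ∈ Set.Ico (Real.pi / 2) Real.pi) (hRa : 0 < R_a) (hD : 0 ≤ D)
    (hb₁ : b₁ = R_a * Real.sin Ω + D * Real.cos Ω)
    (hb₂ : b₂ = R_a * (1 - Real.cos Ω) + D * Real.sin Ω)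
    (hR₁ : R_a ≤ R₁) (hR₂ : R_a ≤ R₂)
    (hd₁ : 0 ≤ d₁) (hd₂ : 0 ≤ d₂) (hd₃ : 0 ≤ d₃)
    (hL : L = d₁ + R₁ * Ω / 2 + d₂ + R₂ * Ω / 2 + d₃)
    (hφ0 : ∀ s ∈ Set.Icc (0:ℝ) d₁, φ s = 0)
    (hφ1 : ∀ s ∈ Set.Icc d₁ (d₁ + R₁ * Ω / 2), φ s = (s - d₁) / R₁)
    (hφ2 : ∀ s ∈ Set.Icc (d₁ + R₁ * Ω / 2) (d₁ + R₁ * Ω / 2 + d₂), φ s = Ω / 2)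
    (hφ3 : ∀ s ∈ Set.Icc (d₁ + R₁ * Ω / 2 + d₂) (d₁ + R₁ * Ω / 2 + d₂ + R₂ * Ω / 2),
      φ s = Ω / 2 + (s - d₁ - R₁ * Ω / 2 - d₂) / R₂)
    (hφ4 : ∀ s ∈ Set.Icc (d₁ + R₁ * Ω / 2 + d₂ + R₂ * Ω / 2) L, φ s = Ω)
    (h : Admissible Ω b₁ b₂ L φ) :
    R₁ = R_a ∧ R₂ = R_a ∧ d₁ = 0 ∧ d₂ = 0 ∧ d₃ = D := by
  obtain ⟨hLpos, hmono, ⟨K, hK0, hK⟩, hφz, hφLv, hX, hY⟩ := h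
  rw [LipOn] at hK
  have hpi := Real.pi_pos
  have hΩpos : 0 < Ω := lt_of_lt_of_le (by linarith) hΩ.1
  have hΩpi : Ω < Real.pi := hΩ.2
  have hΩhalf : Real.pi / 2 ≤ Ω := hΩ.1
  have hR₁0 : 0 < R₁ := lt_of_lt_of_le hRa hR₁
  have hR₂0 : 0 < R₂ := lt_of_lt_of_le hRa hR₂
  have harc1 : 0 < R₁ * Ω / 2 := by positivity
  have harc2 : 0 < R₂ * Ω / 2 := by positivity
  set m2 := d₁ + R₁ * Ω / 2 with hm2
  set m3 := m2 + d₂ with hm3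
  set m4 := m3 + R₂ * Ω / 2 with hm4
  have o2 : d₁ ≤ m2 := by rw [hm2]; linarith
  have o3 : m2 ≤ m3 := by rw [hm3]; linarith
  have o4 : m3 ≤ m4 := by rw [hm4]; linarith
  have o5 : m4 ≤ L := by rw [hL]; linarith
  have hd₁L : d₁ ≤ L := le_trans o2 (le_trans o3 (le_trans o4 o5))
  have hm2L : m2 ≤ L := le_trans o3 (le_trans o4 o5)
  have hm3L : m3 ≤ L := le_trans o4 o5
  have hm20 : 0 ≤ m2 := le_trans hd₁ o2
  have hm30 : 0 ≤ m3 := le_trans hm20 o3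
  have hm40 : 0 ≤ m4 := le_trans hm30 o4
  have hφc : ContinuousOn φ (Set.Icc 0 L) := by
    have : LipschitzOnWith K.toNNReal φ (Set.Icc 0 L) :=
      LipschitzOnWith.of_dist_le_mul fun x hx y hy => by
        simp only [Real.dist_eq]
        rw [Real.coe_toNNReal K hK0]
        exact hK x hx y hy
    exact this.continuousOn
  have hci : ∀ a b : ℝ, 0 ≤ a → a ≤ b → b ≤ L →
      IntervalIntegrable (fun s => Real.cos (φ s)) MeasureTheory.volume a b := by
    intro a b ha hab hbL
    apply ContinuousOn.intervalIntegrable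
    rw [Set.uIcc_of_le hab]
    exact (Real.continuous_cos.comp_continuousOn hφc).mono (Set.Icc_subset_Icc ha hbL)
  have hsi : ∀ a b : ℝ, 0 ≤ a → a ≤ b → b ≤ L →
      IntervalIntegrable (fun s => Real.sin (φ s)) MeasureTheory.volume a b := by
    intro a b ha hab hbL
    apply ContinuousOn.intervalIntegrable
    rw [Set.uIcc_of_le hab]
    exact (Real.continuous_sin.comp_continuousOn hφc).mono (Set.Icc_subset_Icc ha hbL)
  have splitg : ∀ g : ℝ → ℝ, (∀ a b : ℝ, 0 ≤ a → a ≤ b → b ≤ L →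
      IntervalIntegrable g MeasureTheory.volume a b) →
      (∫ s in (0:ℝ)..L, g s) = (∫ s in (0:ℝ)..d₁, g s) + (∫ s in d₁..m2, g s)
        + (∫ s in m2..m3, g s) + (∫ s in m3..m4, g s) + (∫ s in m4..L, g s) := by
    intro g hg
    have s1 := intervalIntegral.integral_add_adjacent_intervals
      (hg 0 d₁ le_rfl hd₁ hd₁L) (hg d₁ m2 hd₁ o2 hm2L)
    have s2 := intervalIntegral.integral_add_adjacent_intervals
      (hg 0 m2 le_rfl hm20 hm2L) (hg m2 m3 hm20 o3 hm3L)
    have s3 := intervalIntegral.integral_add_adjacent_intervals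
      (hg 0 m3 le_rfl hm30 hm3L) (hg m3 m4 hm30 o4 o5)
    have s4 := intervalIntegral.integral_add_adjacent_intervals
      (hg 0 m4 le_rfl hm40 o5) (hg m4 L hm40 o5 le_rfl)
    rw [← s4, ← s3, ← s2, ← s1]
  have harg3 : ∀ s : ℝ, s - d₁ - R₁ * Ω / 2 - d₂ = s - m3 := by
    intro s; rw [hm3, hm2]; ring
  have hfr1 : (m2 - d₁) / R₁ = Ω / 2 := by rw [hm2]; field_simp; ring
  have hfr2 : (m4 - m3) / R₂ = Ω / 2 := by rw [hm4]; field_simp; ring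
  have hLm4 : L - m4 = d₃ := by rw [hL]; ring
  -- cos pieces
  have Pc1 : (∫ s in (0:ℝ)..d₁, Real.cos (φ s)) = d₁ := by
    rw [intervalIntegral.integral_congr (g := fun _ : ℝ => (1:ℝ))
      (fun s hs => by rw [Set.uIcc_of_le hd₁] at hs; simp [hφ0 s hs])]
    simp
  have Pc2 : (∫ s in d₁..m2, Real.cos (φ s)) = R₁ * Real.sin (Ω / 2) := by
    rw [intervalIntegral.integral_congr (g := fun s : ℝ => Real.cos (0 + (s - d₁) / R₁))
      (fun s hs => by rw [Set.uIcc_of_le o2] at hs; rw [hφ1 s hs]; norm_num)]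
    rw [int_cos_aff d₁ m2 0 R₁ hR₁0.ne', hfr1]
    simp
  have Pc3 : (∫ s in m2..m3, Real.cos (φ s)) = d₂ * Real.cos (Ω / 2) := by
    rw [intervalIntegral.integral_congr (g := fun _ : ℝ => Real.cos (Ω / 2))
      (fun s hs => by rw [Set.uIcc_of_le o3] at hs; rw [hφ2 s hs])]
    rw [intervalIntegral.integral_const, hm3]
    simp
  have Pc4 : (∫ s in m3..m4, Real.cos (φ s))
      = R₂ * Real.sin Ω - R₂ * Real.sin (Ω / 2) := by
    rw [intervalIntegral.integral_congr (g := fun s : ℝ => Real.cos (Ω / 2 + (s - m3) / R₂))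
      (fun s hs => by rw [Set.uIcc_of_le o4] at hs; rw [hφ3 s hs, harg3 s])]
    rw [int_cos_aff m3 m4 (Ω / 2) R₂ hR₂0.ne', hfr2]
    norm_num
  have Pc5 : (∫ s in m4..L, Real.cos (φ s)) = d₃ * Real.cos Ω := by
    rw [intervalIntegral.integral_congr (g := fun _ : ℝ => Real.cos Ω)
      (fun s hs => by rw [Set.uIcc_of_le o5] at hs; rw [hφ4 s hs])]
    rw [intervalIntegral.integral_const, hLm4]
    simp
  -- sin pieces
  have Ps1 : (∫ s in (0:ℝ)..d₁, Real.sin (φ s)) = 0 := by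
    rw [intervalIntegral.integral_congr (g := fun _ : ℝ => (0:ℝ))
      (fun s hs => by rw [Set.uIcc_of_le hd₁] at hs; simp [hφ0 s hs])]
    simp
  have Ps2 : (∫ s in d₁..m2, Real.sin (φ s)) = R₁ - R₁ * Real.cos (Ω / 2) := by
    rw [intervalIntegral.integral_congr (g := fun s : ℝ => Real.sin (0 + (s - d₁) / R₁))
      (fun s hs => by rw [Set.uIcc_of_le o2] at hs; rw [hφ1 s hs]; norm_num)]
    rw [int_sin_aff d₁ m2 0 R₁ hR₁0.ne', hfr1]
    simp
  have Ps3 : (∫ s in m2..m3, Real.sin (φ s)) = d₂ * Real.sin (Ω / 2) := by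
    rw [intervalIntegral.integral_congr (g := fun _ : ℝ => Real.sin (Ω / 2))
      (fun s hs => by rw [Set.uIcc_of_le o3] at hs; rw [hφ2 s hs])]
    rw [intervalIntegral.integral_const, hm3]
    simp
  have Ps4 : (∫ s in m3..m4, Real.sin (φ s))
      = R₂ * Real.cos (Ω / 2) - R₂ * Real.cos Ω := by
    rw [intervalIntegral.integral_congr (g := fun s : ℝ => Real.sin (Ω / 2 + (s - m3) / R₂))
      (fun s hs => by rw [Set.uIcc_of_le o4] at hs; rw [hφ3 s hs, harg3 s])]
    rw [int_sin_aff m3 m4 (Ω / 2) R₂ hR₂0.ne', hfr2]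
    norm_num
  have Ps5 : (∫ s in m4..L, Real.sin (φ s)) = d₃ * Real.sin Ω := by
    rw [intervalIntegral.integral_congr (g := fun _ : ℝ => Real.sin Ω)
      (fun s hs => by rw [Set.uIcc_of_le o5] at hs; rw [hφ4 s hs])]
    rw [intervalIntegral.integral_const, hLm4]
    simp
  rw [splitg _ hci, Pc1, Pc2, Pc3, Pc4, Pc5, hb₁] at hX
  rw [splitg _ hsi, Ps1, Ps2, Ps3, Ps4, Ps5, hb₂] at hY
  -- trigonometric identities
  set s := Real.sin (Ω / 2) with hsdef
  set c := Real.cos (Ω / 2) with hcdef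
  have hs2 : Real.sin Ω = 2 * s * c := by
    rw [hsdef, hcdef, ← Real.sin_two_mul]; congr 1; ring
  have hc2 : Real.cos Ω = 2 * c ^ 2 - 1 := by
    rw [hcdef, ← Real.cos_two_mul]; congr 1; ring
  have hsv : 0 < s := Real.sin_pos_of_pos_of_lt_pi (by linarith) (by linarith)
  have hcv : 0 < c := Real.cos_pos_of_mem_Ioo ⟨by linarith, by linarith⟩
  have pyth : s ^ 2 + c ^ 2 = 1 := Real.sin_sq_add_cos_sq (Ω / 2)
  have hcs : 2 * c ^ 2 ≤ 1 := by
    have h4 : c ≤ Real.cos (Real.pi / 4) :=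
      Real.cos_le_cos_of_nonneg_of_le_pi (by positivity) (by linarith) (by linarith)
    rw [Real.cos_pi_div_four] at h4
    have h5 : c * c ≤ (Real.sqrt 2 / 2) * (Real.sqrt 2 / 2) := mul_self_le_mul_self hcv.le h4
    have h6 : Real.sqrt 2 * Real.sqrt 2 = 2 := Real.mul_self_sqrt (by norm_num)
    have h7 : c ^ 2 ≤ 1 / 2 := by rw [sq]; linarith only [h5, h6]
    linarith only [h7]
  have hc1 : c < 1 := by linarith only [hcs, hcv, sq_nonneg (c - 1)]
  rw [hs2, hc2] at hX hY
  exact alg_core R_a D R₁ R₂ d₁ d₂ d₃ s c hsv hcv hc1 hcs pyth hRa hR₁ hR₂ hd₁ hd₂ hd₃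
    (by linear_combination hX) (by linear_combination hY)
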